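/- Let 𝒩 be a nest on a separable complex Hilbert space H and Q ∈ 𝒩 with Q ≠ {0} and Q_- = Q. Suppose a, b ∈ Alg 𝒩 and ε > 0 satisfy ‖Q P^⊥ a Q P^⊥‖ ≥ 2ε and ‖Q P^⊥ b Q P^⊥‖ ≥ 2ε for all P ∈ 𝒩 with P < Q. Then there exist orthonormal sequences (e_n) and (f_n) in H such that e_n ⊗ f_n ∈ Alg 𝒩 for every n, and for every strictly increasing sequence (k_n) of natural numbers the sum Σ_n e_{k_n} ⊗ f_{k_n} converges in the strong operator topology to a bounded operator c with ‖Q P^⊥ a c b Q P^⊥‖ ≥ ε² for all P ∈ 𝒩 with P < Q. -/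

import Mathlib

open scoped InnerProductSpace

set_option synthInstance.maxHeartbeats 1000000
set_option maxHeartbeats 1000000

/-- A nest on a complex Hilbert space `H`: a family of closed subspaces, totally ordered by
inclusion, containing `{0}` and `H`, closed under intersections and closed linear spans. -/
structure Nest (H : Type*) [NormedAddCommGroup H] [InnerProductSpace ℂ H]
    [CompleteSpace H] where
  carrier : Set (Submodule ℂ H)
  isClosed : ∀ N ∈ carrier, IsClosed (N : Set H)
  total : ∀ N ∈ carrier, ∀ M ∈ carrier, N ≤ M ∨ M ≤ N
  bot_mem : ⊥ ∈ carrier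
  top_mem : ⊤ ∈ carrier
  sInf_mem : ∀ S ⊆ carrier, S.Nonempty → sInf S ∈ carrier
  closedSpan_mem : ∀ S ⊆ carrier, S.Nonempty → (sSup S).topologicalClosure ∈ carrier

variable {H : Type*} [NormedAddCommGroup H] [InnerProductSpace ℂ H] [CompleteSpace H]

/-- The orthogonal projection onto a closed subspace, as an operator `H →L[ℂ] H`. -/
noncomputable def subProj (N : Submodule ℂ H) (hN : IsClosed (N : Set H)) : H →L[ℂ] H :=
  haveI : CompleteSpace N := hN.completeSpace_coe
  N.subtypeL ∘L N.orthogonalProjection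

/-- The orthogonal projection onto an element of a nest. -/
noncomputable def Nest.proj (𝒩 : Nest H) (N : Submodule ℂ H) (hN : N ∈ 𝒩.carrier) :
    H →L[ℂ] H :=
  subProj N (𝒩.isClosed N hN)

/-- The nest algebra of all bounded operators leaving every element of the nest invariant. -/
def nestAlgebra (𝒩 : Nest H) : Subalgebra ℂ (H →L[ℂ] H) where
  carrier := {T | ∀ N ∈ 𝒩.carrier, ∀ x ∈ N, T x ∈ N}
  mul_mem' := fun hT hS N hN x hx => hT N hN _ (hS N hN x hx)
  one_mem' := fun N _ x hx => hx
  add_mem' := fun hT hS N hN x hx => N.add_mem (hT N hN x hx) (hS N hN x hx)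
  algebraMap_mem' := fun r N _ x hx => by
    simpa [Algebra.algebraMap_eq_smul_one] using N.smul_mem r hx

/-- `Q₋`: the closed span of the elements of the nest strictly below `Q`. -/
def Nest.pred (𝒩 : Nest H) (Q : Submodule ℂ H) : Submodule ℂ H :=
  (sSup {P | P ∈ 𝒩.carrier ∧ P < Q}).topologicalClosure

/-- `Q₊`: the intersection of the elements of the nest strictly above `Q`. -/
def Nest.succ (𝒩 : Nest H) (Q : Submodule ℂ H) : Submodule ℂ H :=
  sInf {P | P ∈ 𝒩.carrier ∧ Q < P}

/-- The projection onto `Q₋`. -/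
noncomputable def Nest.predProj (𝒩 : Nest H) (Q : Submodule ℂ H) : H →L[ℂ] H :=
  subProj (𝒩.pred Q) (Submodule.isClosed_topologicalClosure _)

/-- The rank one operator `e ⊗ f : h ↦ ⟨h, e⟩ f` (inner product linear in `h`). -/
noncomputable def rankOne (e f : H) : H →L[ℂ] H :=
  (ContinuousLinearMap.toSpanSingleton ℂ f).comp (innerSL ℂ e)

/-- The Jacobson radical of the nest algebra, viewed as a set of operators on `H`. -/
def nestRadical (𝒩 : Nest H) : Set (H →L[ℂ] H) :=
  (fun a : nestAlgebra 𝒩 => (a : H →L[ℂ] H)) ''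
    {a | a ∈ (⊥ : TwoSidedIdeal (nestAlgebra 𝒩)).jacobson}

/-- `K(𝒩)`: the compact operators belonging to the nest algebra. -/
def nestCompacts (𝒩 : Nest H) : Set (H →L[ℂ] H) :=
  {T | T ∈ nestAlgebra 𝒩 ∧ IsCompactOperator T}

/-- `K(𝒩) + Rad(Alg 𝒩)` as a set of operators. -/
def nestKplusRad (𝒩 : Nest H) : Set (H →L[ℂ] H) :=
  {T | ∃ k ∈ nestCompacts 𝒩, ∃ r ∈ nestRadical 𝒩, T = k + r}

section NestAux

open scoped ComplexConjugate

variable {𝒩 : Nest H}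

lemma subProj_mem (N : Submodule ℂ H) (hN : IsClosed (N : Set H)) (x : H) :
    subProj N hN x ∈ N := by
  haveI : CompleteSpace N := hN.completeSpace_coe
  exact (N.orthogonalProjectionOnto x).2

lemma subProj_eq_self (N : Submodule ℂ H) (hN : IsClosed (N : Set H)) {x : H} (hx : x ∈ N) :
    subProj N hN x = x := by
  haveI : CompleteSpace N := hN.completeSpace_coe
  exact (Submodule.starProjection_eq_self_iff (K := N)).2 hx

lemma inner_sub_subProj (N : Submodule ℂ H) (hN : IsClosed (N : Set H)) (x : H)
    {y : H} (hy : y ∈ N) : ⟪x - subProj N hN x, y⟫_ℂ = 0 := by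
  haveI : CompleteSpace N := hN.completeSpace_coe
  exact Submodule.starProjection_inner_eq_zero (K := N) x y hy

lemma inner_subProj_left_eq_right (N : Submodule ℂ H) (hN : IsClosed (N : Set H)) (x y : H) :
    ⟪subProj N hN x, y⟫_ℂ = ⟪x, subProj N hN y⟫_ℂ := by
  haveI : CompleteSpace N := hN.completeSpace_coe
  exact Submodule.inner_starProjection_left_eq_right N x y

lemma norm_sq_subProj (N : Submodule ℂ H) (hN : IsClosed (N : Set H)) (x : H) :
    ‖x‖ ^ 2 = ‖subProj N hN x‖ ^ 2 + ‖x - subProj N hN x‖ ^ 2 := by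
  have h := norm_add_sq_eq_norm_sq_add_norm_sq_of_inner_eq_zero (𝕜 := ℂ)
    (subProj N hN x) (x - subProj N hN x) ?_
  · simp only [add_sub_cancel] at h
    rw [pow_two, pow_two, pow_two, h]
  · rw [← inner_conj_symm]
    rw [inner_sub_subProj N hN x (subProj_mem N hN x)]
    simp

lemma norm_subProj_le (N : Submodule ℂ H) (hN : IsClosed (N : Set H)) (x : H) :
    ‖subProj N hN x‖ ≤ ‖x‖ := by
  have h := norm_sq_subProj N hN x
  nlinarith [norm_nonneg (subProj N hN x), norm_nonneg x, sq_nonneg ‖x - subProj N hN x‖]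

lemma norm_sub_subProj_le (N : Submodule ℂ H) (hN : IsClosed (N : Set H)) (x : H) :
    ‖x - subProj N hN x‖ ≤ ‖x‖ := by
  have h := norm_sq_subProj N hN x
  nlinarith [norm_nonneg (x - subProj N hN x), norm_nonneg x, sq_nonneg ‖subProj N hN x‖]

lemma norm_sub_subProj_min (N : Submodule ℂ H) (hN : IsClosed (N : Set H)) (x : H)
    {y : H} (hy : y ∈ N) : ‖x - subProj N hN x‖ ≤ ‖x - y‖ := by
  have key : ‖x - y‖ ^ 2 = ‖subProj N hN x - y‖ ^ 2 + ‖x - subProj N hN x‖ ^ 2 := by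
    have h := norm_add_sq_eq_norm_sq_add_norm_sq_of_inner_eq_zero (𝕜 := ℂ)
      (subProj N hN x - y) (x - subProj N hN x) ?_
    · rw [pow_two, pow_two, pow_two, ← h]
      congr 2 <;> abel_nf
    · rw [← inner_conj_symm]
      rw [inner_sub_subProj N hN x (N.sub_mem (subProj_mem N hN x) hy)]
      simp
  nlinarith [norm_nonneg (x - subProj N hN x), norm_nonneg (x - y),
    sq_nonneg ‖subProj N hN x - y‖]

lemma subProj_subProj_of_le {N M : Submodule ℂ H} (hN : IsClosed (N : Set H))
    (hM : IsClosed (M : Set H)) (h : N ≤ M) (x : H) :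
    subProj N hN (subProj M hM x) = subProj N hN x := by
  haveI : CompleteSpace N := hN.completeSpace_coe
  haveI : CompleteSpace M := hM.completeSpace_coe
  have := Submodule.orthogonalProjectionOnto_starProjection_of_le h x
  simp only [subProj, ContinuousLinearMap.coe_comp', Function.comp_apply,
    Submodule.coe_subtypeL', Submodule.coe_subtype]
  exact congrArg Subtype.val this

lemma subProj_of_mem_le {N M : Submodule ℂ H} (hN : IsClosed (N : Set H))
    (hM : IsClosed (M : Set H)) (h : N ≤ M) (x : H) :
    subProj M hM (subProj N hN x) = subProj N hN x :=
  subProj_eq_self M hM (h (subProj_mem N hN x))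

lemma subProj_eq_zero_of_orth (N : Submodule ℂ H) (hN : IsClosed (N : Set H)) {x : H}
    (hx : ∀ y ∈ N, ⟪y, x⟫_ℂ = 0) : subProj N hN x = 0 := by
  haveI : CompleteSpace N := hN.completeSpace_coe
  have : N.orthogonalProjectionOnto x = 0 := Submodule.orthogonalProjectionOnto_eq_zero_iff.2 hx
  exact congrArg Subtype.val this

omit [CompleteSpace H] in
lemma inner_eq_zero_of_orth_left {N : Submodule ℂ H} {x y : H}
    (hx : ∀ w ∈ N, ⟪w, x⟫_ℂ = 0) (hy : y ∈ N) : ⟪x, y⟫_ℂ = 0 := by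
  rw [← inner_conj_symm, hx y hy, map_zero]

end NestAux
section NestAux2

variable {𝒩 : Nest H} {Q : Submodule ℂ H}

lemma EP_apply (𝒩 : Nest H) {Q P : Submodule ℂ H} (hQ : Q ∈ 𝒩.carrier) (hP : P ∈ 𝒩.carrier)
    (hPQ : P ≤ Q) (x : H) :
    (𝒩.proj Q hQ * (1 - 𝒩.proj P hP)) x
      = subProj Q (𝒩.isClosed Q hQ) x - subProj P (𝒩.isClosed P hP) x := by
  have : (𝒩.proj Q hQ * (1 - 𝒩.proj P hP)) x
      = subProj Q (𝒩.isClosed Q hQ) (x - subProj P (𝒩.isClosed P hP) x) := rfl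
  rw [this, map_sub, subProj_of_mem_le (𝒩.isClosed P hP) (𝒩.isClosed Q hQ) hPQ]

lemma nest_approx (hQ : Q ∈ 𝒩.carrier) (hQbot : Q ≠ ⊥) (hQpred : 𝒩.pred Q = Q)
    {u : H} (hu : u ∈ Q) {δ : ℝ} (hδ : 0 < δ) :
    ∃ P, ∃ hP : P ∈ 𝒩.carrier, P < Q ∧ ‖u - subProj P (𝒩.isClosed P hP) u‖ < δ := by
  set S : Set (Submodule ℂ H) := {P | P ∈ 𝒩.carrier ∧ P < Q} with hS
  have hSne : S.Nonempty := ⟨⊥, 𝒩.bot_mem, bot_lt_iff_ne_bot.2 hQbot⟩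
  have hdir : DirectedOn (· ≤ ·) S := fun P₁ h₁ P₂ h₂ => by
    rcases 𝒩.total P₁ h₁.1 P₂ h₂.1 with h | h
    · exact ⟨P₂, h₂, h, le_rfl⟩
    · exact ⟨P₁, h₁, le_rfl, h⟩
  have hu' : u ∈ closure ((sSup S : Submodule ℂ H) : Set H) := by
    rw [← Submodule.topologicalClosure_coe]
    have : u ∈ 𝒩.pred Q := hQpred.symm ▸ hu
    exact this
  rw [Metric.mem_closure_iff] at hu'
  obtain ⟨v, hv, hvd⟩ := hu' δ hδ
  rw [SetLike.mem_coe, Submodule.mem_sSup_of_directed hSne hdir] at hv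
  obtain ⟨P, hPS, hvP⟩ := hv
  refine ⟨P, hPS.1, hPS.2, ?_⟩
  calc ‖u - subProj P (𝒩.isClosed P hPS.1) u‖ ≤ ‖u - v‖ :=
        norm_sub_subProj_min P _ u hvP
    _ < δ := by rwa [dist_eq_norm] at hvd

lemma nest_exists_between (hQpred : 𝒩.pred Q = Q)
    {P : Submodule ℂ H} (hP : P ∈ 𝒩.carrier) (hPQ : P < Q) :
    ∃ P', P' ∈ 𝒩.carrier ∧ P < P' ∧ P' < Q := by
  by_contra hcon
  push_neg at hcon
  have hle : ∀ P' ∈ {P | P ∈ 𝒩.carrier ∧ P < Q}, P' ≤ P := by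
    rintro P' ⟨hP', hP'Q⟩
    rcases 𝒩.total P' hP' P hP with h | h
    · exact h
    · rcases lt_or_eq_of_le h with h' | h'
      · exact absurd (hcon P' hP' h') (not_not.2 hP'Q)
      · exact h'.ge
  have : 𝒩.pred Q ≤ P :=
    Submodule.topologicalClosure_minimal _ (sSup_le hle) (𝒩.isClosed P hP)
  rw [hQpred] at this
  exact absurd this (not_le_of_gt hPQ)

end NestAux2
section OrthSum

variable {g : ℕ → H} {α : ℕ → ℂ}

lemma orth_summable (hg : Orthonormal ℂ g) (hα : Summable fun n => ‖α n‖ ^ 2) :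
    Summable fun n => α n • g n := by
  have hfam := hg.orthogonalFamily
  have := (hfam.summable_iff_norm_sq_summable α).2 (by simpa using hα)
  simpa [LinearIsometry.toSpanSingleton_apply] using this

lemma orth_norm_tsum_sq (hg : Orthonormal ℂ g) (hα : Summable fun n => ‖α n‖ ^ 2) :
    ‖∑' n, α n • g n‖ ^ 2 = ∑' n, ‖α n‖ ^ 2 := by
  have hs : HasSum (fun n => α n • g n) (∑' n, α n • g n) :=
    (orth_summable hg hα).hasSum
  have h1 : Filter.Tendsto (fun s : Finset ℕ => ‖∑ n ∈ s, α n • g n‖ ^ 2)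
      Filter.atTop (nhds (‖∑' n, α n • g n‖ ^ 2)) := by
    exact ((continuous_norm.pow 2).continuousAt).tendsto.comp hs
  have h2 : ∀ s : Finset ℕ, ‖∑ n ∈ s, α n • g n‖ ^ 2 = ∑ n ∈ s, ‖α n‖ ^ 2 := by
    intro s
    have := hg.orthogonalFamily.norm_sum (fun n => α n) s
    simpa [LinearIsometry.toSpanSingleton_apply] using this
  simp only [h2] at h1
  exact tendsto_nhds_unique h1 hα.hasSum
end OrthSum
section Synth

variable (e' f' : ℕ → H)

noncomputable def synthFun (h : H) : H := ∑' n, ⟪e' n, h⟫_ℂ • f' n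

variable {e' f'}

lemma synth_summable (he' : Orthonormal ℂ e') (hf' : Orthonormal ℂ f') (h : H) :
    Summable fun n => ⟪e' n, h⟫_ℂ • f' n :=
  orth_summable hf' (Orthonormal.inner_products_summable h he')

lemma synth_hasSum (he' : Orthonormal ℂ e') (hf' : Orthonormal ℂ f') (h : H) :
    HasSum (fun n => ⟪e' n, h⟫_ℂ • f' n) (synthFun e' f' h) :=
  (synth_summable he' hf' h).hasSum

lemma synth_norm_le (he' : Orthonormal ℂ e') (hf' : Orthonormal ℂ f') (h : H) :
    ‖synthFun e' f' h‖ ≤ ‖h‖ := by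
  have h1 : ‖synthFun e' f' h‖ ^ 2 = ∑' n, ‖⟪e' n, h⟫_ℂ‖ ^ 2 :=
    orth_norm_tsum_sq hf' (Orthonormal.inner_products_summable h he')
  have h2 : ∑' n, ‖⟪e' n, h⟫_ℂ‖ ^ 2 ≤ ‖h‖ ^ 2 := he'.tsum_inner_products_le h
  nlinarith [norm_nonneg (synthFun e' f' h), norm_nonneg h]

lemma synth_add (he' : Orthonormal ℂ e') (hf' : Orthonormal ℂ f') (h₁ h₂ : H) :
    synthFun e' f' (h₁ + h₂) = synthFun e' f' h₁ + synthFun e' f' h₂ := by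
  have : ∀ n, ⟪e' n, h₁ + h₂⟫_ℂ • f' n = ⟪e' n, h₁⟫_ℂ • f' n + ⟪e' n, h₂⟫_ℂ • f' n := by
    intro n; rw [inner_add_right, add_smul]
  unfold synthFun
  rw [tsum_congr this]
  exact Summable.tsum_add (synth_summable he' hf' h₁) (synth_summable he' hf' h₂)

lemma synth_smul (he' : Orthonormal ℂ e') (hf' : Orthonormal ℂ f') (r : ℂ) (h : H) :
    synthFun e' f' (r • h) = r • synthFun e' f' h := by
  have : ∀ n, ⟪e' n, r • h⟫_ℂ • f' n = r • (⟪e' n, h⟫_ℂ • f' n) := by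
    intro n; rw [inner_smul_right, smul_smul]
  unfold synthFun
  rw [tsum_congr this, Summable.tsum_const_smul r (synth_summable he' hf' h)]

noncomputable def synthOp (he' : Orthonormal ℂ e') (hf' : Orthonormal ℂ f') : H →L[ℂ] H :=
  LinearMap.mkContinuous
    { toFun := synthFun e' f'
      map_add' := synth_add he' hf'
      map_smul' := synth_smul he' hf' } 1
    (fun h => by simpa using synth_norm_le he' hf' h)

lemma synthOp_apply (he' : Orthonormal ℂ e') (hf' : Orthonormal ℂ f') (h : H) :
    synthOp he' hf' h = synthFun e' f' h := rfl

end Synth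

omit [CompleteSpace H] in
lemma rankOne_apply' (e f x : H) : rankOne e f x = ⟪e, x⟫_ℂ • f := rfl
section NestAux5

variable {𝒩 : Nest H} {Q : Submodule ℂ H}

lemma approx_mono {P P' : Submodule ℂ H} (hP : IsClosed (P : Set H))
    (hP' : IsClosed (P' : Set H)) (h : P ≤ P') (u : H) :
    ‖u - subProj P' hP' u‖ ≤ ‖u - subProj P hP u‖ :=
  norm_sub_subProj_min P' hP' u (h (subProj_mem P hP u))

lemma nest_approx_list (hQ : Q ∈ 𝒩.carrier) (hQbot : Q ≠ ⊥) (hQpred : 𝒩.pred Q = Q)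
    (L : List H) (hL : ∀ u ∈ L, u ∈ Q) {δ : ℝ} (hδ : 0 < δ) :
    ∃ P, ∃ hP : P ∈ 𝒩.carrier, P < Q ∧
      ∀ u ∈ L, ‖u - subProj P (𝒩.isClosed P hP) u‖ < δ := by
  induction L with
  | nil => exact ⟨⊥, 𝒩.bot_mem, bot_lt_iff_ne_bot.2 hQbot, by simp⟩
  | cons u L ih =>
    obtain ⟨P₁, hP₁, hP₁Q, hP₁u⟩ := nest_approx hQ hQbot hQpred
      (hL u List.mem_cons_self) hδ
    obtain ⟨P₂, hP₂, hP₂Q, hP₂L⟩ := ih (fun v hv => hL v (List.mem_cons_of_mem u hv))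
    rcases 𝒩.total P₁ hP₁ P₂ hP₂ with hle | hle
    · refine ⟨P₂, hP₂, hP₂Q, ?_⟩
      intro v hv
      rcases List.mem_cons.1 hv with rfl | hv
      · exact lt_of_le_of_lt (approx_mono _ _ hle v) hP₁u
      · exact hP₂L v hv
    · refine ⟨P₁, hP₁, hP₁Q, ?_⟩
      intro v hv
      rcases List.mem_cons.1 hv with rfl | hv
      · exact hP₁u
      · exact lt_of_le_of_lt (approx_mono _ _ hle v) (hP₂L v hv)

end NestAux5
/-- Lemma 2 (Lemma `cont`) of the paper. -/
theorem nest_cont_lemma [TopologicalSpace.SeparableSpace H] (𝒩 : Nest H)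
    (Q : Submodule ℂ H) (hQ : Q ∈ 𝒩.carrier) (hQbot : Q ≠ ⊥) (hQpred : 𝒩.pred Q = Q)
    (a b : H →L[ℂ] H) (ha : a ∈ nestAlgebra 𝒩) (hb : b ∈ nestAlgebra 𝒩)
    (ε : ℝ) (hε : 0 < ε)
    (hna : ∀ P, ∀ hP : P ∈ 𝒩.carrier, P < Q →
      2 * ε ≤ ‖(𝒩.proj Q hQ * (1 - 𝒩.proj P hP)) * a * (𝒩.proj Q hQ * (1 - 𝒩.proj P hP))‖)
    (hnb : ∀ P, ∀ hP : P ∈ 𝒩.carrier, P < Q →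
      2 * ε ≤ ‖(𝒩.proj Q hQ * (1 - 𝒩.proj P hP)) * b * (𝒩.proj Q hQ * (1 - 𝒩.proj P hP))‖) :
    ∃ e f : ℕ → H, Orthonormal ℂ e ∧ Orthonormal ℂ f ∧
      (∀ n, rankOne (e n) (f n) ∈ nestAlgebra 𝒩) ∧
      ∀ k : ℕ → ℕ, StrictMono k → ∃ c : H →L[ℂ] H,
        (∀ h : H,
          Filter.Tendsto (fun N => ∑ n ∈ Finset.range N, rankOne (e (k n)) (f (k n)) h)
            Filter.atTop (nhds (c h))) ∧
        ∀ P, ∀ hP : P ∈ 𝒩.carrier, P < Q →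
          ε ^ 2 ≤ ‖(𝒩.proj Q hQ * (1 - 𝒩.proj P hP)) * a * c * b *
              (𝒩.proj Q hQ * (1 - 𝒩.proj P hP))‖ := by
  classical
  have haalg : ∀ N ∈ 𝒩.carrier, ∀ v ∈ N, a v ∈ N := ha
  have hbalg : ∀ N ∈ 𝒩.carrier, ∀ v ∈ N, b v ∈ N := hb
  have hbotQ : (⊥ : Submodule ℂ H) < Q := bot_lt_iff_ne_bot.2 hQbot
  -- positivity of ‖a‖
  have hapos : 0 < ‖a‖ := by
    rcases (norm_nonneg a).lt_or_eq with h | h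
    · exact h
    · exfalso
      have ha0 : a = 0 := by rwa [eq_comm, norm_eq_zero] at h
      have h2 := hna ⊥ 𝒩.bot_mem hbotQ
      rw [ha0] at h2
      simp only [mul_zero, zero_mul, norm_zero] at h2
      linarith
  -- the tolerance δ
  set δ : ℝ := 3 * ε ^ 2 / (8 * ε + ‖a‖ + 1) with hδdef
  have hden : 0 < 8 * ε + ‖a‖ + 1 := by positivity
  have hδpos : 0 < δ := by positivity
  have hδmul : δ * (8 * ε + ‖a‖ + 1) = 3 * ε ^ 2 := by
    rw [hδdef]; field_simp
  have hδlt : δ < ε := by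
    rw [hδdef, div_lt_iff₀ hden]; nlinarith
  have htwo : 0 < 2 * ε - 2 * δ := by linarith
  have hfinal : ε ^ 2 ≤ (2 * ε - 2 * δ) * (2 * ε - 2 * δ) - ‖a‖ * δ := by nlinarith
  -- selecting near-norming unit vectors
  have hsel : ∀ T : H →L[ℂ] H, 2 * ε ≤ ‖T‖ → ∃ v : H, ‖v‖ = 1 ∧ 2 * ε - δ < ‖T v‖ := by
    intro T hT
    by_contra hcon
    push_neg at hcon
    have hb' : ∀ v : H, ‖T v‖ ≤ (2 * ε - δ) * ‖v‖ := by
      intro v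
      rcases eq_or_ne v 0 with rfl | hv
      · simp
      · have hvn : (0 : ℝ) < ‖v‖ := norm_pos_iff.2 hv
        have hu : ‖((‖v‖ : ℂ))⁻¹ • v‖ = 1 := by
          rw [norm_smul, norm_inv, Complex.norm_real, Real.norm_eq_abs,
            abs_of_pos hvn, inv_mul_cancel₀ (ne_of_gt hvn)]
        have h1 := hcon (((‖v‖ : ℂ))⁻¹ • v) hu
        rw [map_smul, norm_smul, norm_inv, Complex.norm_real, Real.norm_eq_abs,
          abs_of_pos hvn] at h1
        calc ‖T v‖ = ‖v‖ * (‖v‖⁻¹ * ‖T v‖) := by field_simp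
          _ ≤ ‖v‖ * (2 * ε - δ) := by
              exact mul_le_mul_of_nonneg_left h1 (le_of_lt hvn)
          _ = (2 * ε - δ) * ‖v‖ := mul_comm _ _
    have := T.opNorm_le_bound (by linarith) hb'
    linarith
  -- a dense sequence
  haveI : Nonempty H := ⟨0⟩
  obtain ⟨z, hz⟩ := TopologicalSpace.exists_dense_seq H
  -- the inductive step
  have hstep : ∀ (n : ℕ) (P : Submodule ℂ H) (hP : P ∈ 𝒩.carrier), P < Q →
      ∃ (P' : Submodule ℂ H) (hP' : P' ∈ 𝒩.carrier) (s x : H),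
        P < P' ∧ P' < Q ∧
        s ∈ Q ∧ (∀ w ∈ P, ⟪w, s⟫_ℂ = 0) ∧ ‖s‖ ≤ 1 ∧
        2 * ε - δ ≤ ‖a s - subProj P (𝒩.isClosed P hP) (a s)‖ ∧
        x ∈ Q ∧ (∀ w ∈ P, ⟪w, x⟫_ℂ = 0) ∧ ‖x‖ ≤ 1 ∧
        2 * ε - δ ≤ ‖b x - subProj P (𝒩.isClosed P hP) (b x)‖ ∧
        ‖s - subProj P' (𝒩.isClosed P' hP') s‖ ≤ δ / (1 + ‖a‖) ∧
        ‖b x - subProj P' (𝒩.isClosed P' hP') (b x)‖ ≤ δ ∧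
        ∀ i ≤ n, ‖subProj Q (𝒩.isClosed Q hQ) (z i)
            - subProj P' (𝒩.isClosed P' hP') (subProj Q (𝒩.isClosed Q hQ) (z i))‖
          ≤ 1 / (n + 1) := by
    intro n P hP hPQ
    have hPQle : P ≤ Q := le_of_lt hPQ
    have pc : IsClosed (P : Set H) := 𝒩.isClosed P hP
    have qc : IsClosed (Q : Set H) := 𝒩.isClosed Q hQ
    -- choice of s
    obtain ⟨v, hv1, hv2⟩ := hsel _ (hna P hP hPQ)
    set s : H := subProj Q (𝒩.isClosed Q hQ) v - subProj P (𝒩.isClosed P hP) v with hs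
    have hsP : subProj P (𝒩.isClosed P hP) v
        = subProj P (𝒩.isClosed P hP) (subProj Q (𝒩.isClosed Q hQ) v) :=
      (subProj_subProj_of_le (𝒩.isClosed P hP) (𝒩.isClosed Q hQ) hPQle v).symm
    have hsQ' : s ∈ Q := Q.sub_mem (subProj_mem _ _ _) (hPQle (subProj_mem _ _ _))
    have hsorth : ∀ w ∈ P, ⟪w, s⟫_ℂ = 0 := by
      intro w hw
      rw [hs, hsP, ← inner_conj_symm,
        inner_sub_subProj P (𝒩.isClosed P hP) (subProj Q (𝒩.isClosed Q hQ) v) hw, map_zero]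
    have hsnorm : ‖s‖ ≤ 1 := by
      rw [hs, hsP]
      calc ‖subProj Q (𝒩.isClosed Q hQ) v
            - subProj P (𝒩.isClosed P hP) (subProj Q (𝒩.isClosed Q hQ) v)‖
          ≤ ‖subProj Q (𝒩.isClosed Q hQ) v‖ := norm_sub_subProj_le _ _ _
        _ ≤ ‖v‖ := norm_subProj_le _ _ _
        _ = 1 := hv1
    have hTv : ((𝒩.proj Q hQ * (1 - 𝒩.proj P hP)) * a * (𝒩.proj Q hQ * (1 - 𝒩.proj P hP))) v
        = a s - subProj P (𝒩.isClosed P hP) (a s) := by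
      rw [ContinuousLinearMap.mul_apply, ContinuousLinearMap.mul_apply,
        EP_apply 𝒩 hQ hP hPQle, EP_apply 𝒩 hQ hP hPQle, ← hs,
        subProj_eq_self Q (𝒩.isClosed Q hQ) (haalg Q hQ s hsQ')]
    have hsa : 2 * ε - δ ≤ ‖a s - subProj P (𝒩.isClosed P hP) (a s)‖ := by
      rw [← hTv]; exact le_of_lt hv2
    -- choice of x
    obtain ⟨v', hv'1, hv'2⟩ := hsel _ (hnb P hP hPQ)
    set x : H := subProj Q (𝒩.isClosed Q hQ) v' - subProj P (𝒩.isClosed P hP) v' with hx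
    have hxP : subProj P (𝒩.isClosed P hP) v'
        = subProj P (𝒩.isClosed P hP) (subProj Q (𝒩.isClosed Q hQ) v') :=
      (subProj_subProj_of_le (𝒩.isClosed P hP) (𝒩.isClosed Q hQ) hPQle v').symm
    have hxQ' : x ∈ Q := Q.sub_mem (subProj_mem _ _ _) (hPQle (subProj_mem _ _ _))
    have hxorth : ∀ w ∈ P, ⟪w, x⟫_ℂ = 0 := by
      intro w hw
      rw [hx, hxP, ← inner_conj_symm,
        inner_sub_subProj P (𝒩.isClosed P hP) (subProj Q (𝒩.isClosed Q hQ) v') hw, map_zero]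
    have hxnorm : ‖x‖ ≤ 1 := by
      rw [hx, hxP]
      calc ‖subProj Q (𝒩.isClosed Q hQ) v'
            - subProj P (𝒩.isClosed P hP) (subProj Q (𝒩.isClosed Q hQ) v')‖
          ≤ ‖subProj Q (𝒩.isClosed Q hQ) v'‖ := norm_sub_subProj_le _ _ _
        _ ≤ ‖v'‖ := norm_subProj_le _ _ _
        _ = 1 := hv'1
    have hTv' : ((𝒩.proj Q hQ * (1 - 𝒩.proj P hP)) * b * (𝒩.proj Q hQ * (1 - 𝒩.proj P hP))) v'
        = b x - subProj P (𝒩.isClosed P hP) (b x) := by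
      rw [ContinuousLinearMap.mul_apply, ContinuousLinearMap.mul_apply,
        EP_apply 𝒩 hQ hP hPQle, EP_apply 𝒩 hQ hP hPQle, ← hx,
        subProj_eq_self Q (𝒩.isClosed Q hQ) (hbalg Q hQ x hxQ')]
    have hxb : 2 * ε - δ ≤ ‖b x - subProj P (𝒩.isClosed P hP) (b x)‖ := by
      rw [← hTv']; exact le_of_lt hv'2
    -- choice of P'
    set δ' : ℝ := min (δ / (1 + ‖a‖)) (min δ (1 / (n + 1))) with hδ'
    have hδ'pos : 0 < δ' := by
      apply lt_min
      · positivity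
      · apply lt_min hδpos
        positivity
    set L : List H := s :: b x ::
      ((List.range (n+1)).map (fun i => subProj Q (𝒩.isClosed Q hQ) (z i))) with hL
    have hLQ : ∀ u ∈ L, u ∈ Q := by
      intro u hu
      rw [hL] at hu
      rcases List.mem_cons.1 hu with rfl | hu
      · exact hsQ'
      rcases List.mem_cons.1 hu with rfl | hu
      · exact hbalg Q hQ x hxQ'
      obtain ⟨i, _, rfl⟩ := List.mem_map.1 hu
      exact subProj_mem _ _ _
    obtain ⟨P₀, hP₀, hP₀Q, hP₀app⟩ := nest_approx_list hQ hQbot hQpred L hLQ hδ'pos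
    obtain ⟨Pb, hPb, hPbgt, hPbQ⟩ := nest_exists_between hQpred hP hPQ
    have hmain : ∃ P', ∃ hP' : P' ∈ 𝒩.carrier, P < P' ∧ P' < Q ∧
        ∀ u ∈ L, ‖u - subProj P' (𝒩.isClosed P' hP') u‖ ≤ δ' := by
      rcases 𝒩.total P₀ hP₀ Pb hPb with hle | hle
      · exact ⟨Pb, hPb, hPbgt, hPbQ, fun u hu =>
          le_of_lt (lt_of_le_of_lt (approx_mono _ _ hle u) (hP₀app u hu))⟩
      · exact ⟨P₀, hP₀, lt_of_lt_of_le hPbgt hle, hP₀Q, fun u hu => le_of_lt (hP₀app u hu)⟩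
    obtain ⟨P', hP', hPP', hP'Q, hP'app⟩ := hmain
    refine ⟨P', hP', s, x, hPP', hP'Q, hsQ', hsorth, hsnorm, hsa, hxQ', hxorth, hxnorm, hxb,
      ?_, ?_, ?_⟩
    · exact le_trans (hP'app s (by rw [hL]; exact List.mem_cons_self))
        (le_trans (min_le_left _ _) le_rfl)
    · exact le_trans (hP'app (b x) (by rw [hL]; simp))
        (le_trans (min_le_right _ _) (min_le_left _ _))
    · intro i hi
      have hmem : subProj Q (𝒩.isClosed Q hQ) (z i) ∈ L := by
        rw [hL]
        refine List.mem_cons_of_mem _ (List.mem_cons_of_mem _ ?_)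
        exact List.mem_map.2 ⟨i, List.mem_range.2 (Nat.lt_succ_of_le hi), rfl⟩
      refine le_trans (hP'app _ hmem) (le_trans (min_le_right _ _) ?_)
      exact le_trans (min_le_right _ _) (by norm_num)

  -- build the increasing sequence of projections
  choose Pn hPmem sfn xfn hPlt hPltQ hsQ hsOrth hsNorm hsA hxQ hxOrth hxNorm hxB hsApp hxApp
    hzApp using hstep
  let F : ℕ → {p : Submodule ℂ H // p ∈ 𝒩.carrier ∧ p < Q} :=
    fun n => Nat.rec ⟨⊥, 𝒩.bot_mem, hbotQ⟩
      (fun m prev => ⟨Pn m prev.1 prev.2.1 prev.2.2,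
        hPmem m prev.1 prev.2.1 prev.2.2,
        hPltQ m prev.1 prev.2.1 prev.2.2⟩) n
  let PP : ℕ → Submodule ℂ H := fun n => (F n).1
  have hPP : ∀ n, PP n ∈ 𝒩.carrier := fun n => (F n).2.1
  have hPPQ : ∀ n, PP n < Q := fun n => (F n).2.2
  let ss : ℕ → H := fun n => sfn n (PP n) (hPP n) (hPPQ n)
  let xxv : ℕ → H := fun n => xfn n (PP n) (hPP n) (hPPQ n)
  have hPPlt : ∀ n, PP n < PP (n + 1) := fun n => hPlt n (PP n) (hPP n) (hPPQ n)
  have hssQ : ∀ n, ss n ∈ Q := fun n => hsQ n (PP n) (hPP n) (hPPQ n)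
  have hssOrth : ∀ n, ∀ w ∈ PP n, ⟪w, ss n⟫_ℂ = 0 := fun n => hsOrth n (PP n) (hPP n) (hPPQ n)
  have hssNorm : ∀ n, ‖ss n‖ ≤ 1 := fun n => hsNorm n (PP n) (hPP n) (hPPQ n)
  have hssA : ∀ n, 2 * ε - δ ≤
      ‖a (ss n) - subProj (PP n) (𝒩.isClosed (PP n) (hPP n)) (a (ss n))‖ :=
    fun n => hsA n (PP n) (hPP n) (hPPQ n)
  have hxxQ : ∀ n, xxv n ∈ Q := fun n => hxQ n (PP n) (hPP n) (hPPQ n)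
  have hxxOrth : ∀ n, ∀ w ∈ PP n, ⟪w, xxv n⟫_ℂ = 0 := fun n => hxOrth n (PP n) (hPP n) (hPPQ n)
  have hxxNorm : ∀ n, ‖xxv n‖ ≤ 1 := fun n => hxNorm n (PP n) (hPP n) (hPPQ n)
  have hxxB : ∀ n, 2 * ε - δ ≤
      ‖b (xxv n) - subProj (PP n) (𝒩.isClosed (PP n) (hPP n)) (b (xxv n))‖ :=
    fun n => hxB n (PP n) (hPP n) (hPPQ n)
  have hssApp : ∀ n, ‖ss n - subProj (PP (n+1)) (𝒩.isClosed (PP (n+1)) (hPP (n+1))) (ss n)‖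
      ≤ δ / (1 + ‖a‖) := fun n => hsApp n (PP n) (hPP n) (hPPQ n)
  have hbxApp : ∀ n,
      ‖b (xxv n) - subProj (PP (n+1)) (𝒩.isClosed (PP (n+1)) (hPP (n+1))) (b (xxv n))‖ ≤ δ :=
    fun n => hxApp n (PP n) (hPP n) (hPPQ n)
  have hzzApp : ∀ n, ∀ i ≤ n, ‖subProj Q (𝒩.isClosed Q hQ) (z i)
      - subProj (PP (n+1)) (𝒩.isClosed (PP (n+1)) (hPP (n+1))) (subProj Q (𝒩.isClosed Q hQ) (z i))‖
      ≤ 1 / (n + 1) := fun n => hzApp n (PP n) (hPP n) (hPPQ n)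
  have hSM : StrictMono PP := strictMono_nat_of_lt_succ hPPlt
  have hPPmono : ∀ {m n : ℕ}, m ≤ n → PP m ≤ PP n := fun h => (hSM.monotone h)
    -- block vectors
  let gf : ℕ → H := fun n => subProj (PP (n+1)) (𝒩.isClosed (PP (n+1)) (hPP (n+1))) (ss n)
  let yv : ℕ → H := fun n => b (xxv n) - subProj (PP n) (𝒩.isClosed (PP n) (hPP n)) (b (xxv n))
  let ge : ℕ → H := fun n => subProj (PP (n+2)) (𝒩.isClosed (PP (n+2)) (hPP (n+2))) (yv (n+1))
  let ffv : ℕ → H := fun n => ((‖gf n‖ : ℂ))⁻¹ • gf n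
  let eev : ℕ → H := fun n => ((‖ge n‖ : ℂ))⁻¹ • ge n
  have hgfdef : ∀ n, gf n = subProj (PP (n+1)) (𝒩.isClosed (PP (n+1)) (hPP (n+1))) (ss n) :=
    fun n => rfl
  have hyvdef : ∀ n, yv n
      = b (xxv n) - subProj (PP n) (𝒩.isClosed (PP n) (hPP n)) (b (xxv n)) := fun n => rfl
  have hgedef : ∀ n, ge n = subProj (PP (n+2)) (𝒩.isClosed (PP (n+2)) (hPP (n+2))) (yv (n+1)) :=
    fun n => rfl
  have hffdef : ∀ n, ffv n = ((‖gf n‖ : ℂ))⁻¹ • gf n := fun n => rfl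
  have heevdef : ∀ n, eev n = ((‖ge n‖ : ℂ))⁻¹ • ge n := fun n => rfl
  -- facts about gf
  have hgfmem : ∀ n, gf n ∈ PP (n+1) := fun n => subProj_mem _ _ _
  have hgforth : ∀ n, ∀ w ∈ PP n, ⟪w, gf n⟫_ℂ = 0 := by
    intro n w hw
    have h1 : ⟪w, ss n - gf n⟫_ℂ = 0 := by
      rw [← inner_conj_symm, hgfdef,
        inner_sub_subProj _ _ _ (hPPmono (Nat.le_succ n) hw), map_zero]
    have h2 := hssOrth n w hw
    have h3 : ⟪w, gf n⟫_ℂ = ⟪w, ss n⟫_ℂ - ⟪w, ss n - gf n⟫_ℂ := by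
      rw [inner_sub_right]; ring
    rw [h3, h1, h2, sub_zero]
  have hgfnorm : ∀ n, ‖gf n‖ ≤ 1 := fun n =>
    le_trans (norm_subProj_le _ _ _) (hssNorm n)
  have hgfA : ∀ n, 2 * ε - 2 * δ ≤
      ‖a (gf n) - subProj (PP n) (𝒩.isClosed (PP n) (hPP n)) (a (gf n))‖ := by
    intro n
    have heq : (a (ss n) - subProj (PP n) (𝒩.isClosed (PP n) (hPP n)) (a (ss n)))
        - (a (gf n) - subProj (PP n) (𝒩.isClosed (PP n) (hPP n)) (a (gf n)))
        = (a (ss n) - a (gf n))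
          - subProj (PP n) (𝒩.isClosed (PP n) (hPP n)) (a (ss n) - a (gf n)) := by
      rw [map_sub]; abel
    have hsub : ‖(a (ss n) - subProj (PP n) (𝒩.isClosed (PP n) (hPP n)) (a (ss n)))
        - (a (gf n) - subProj (PP n) (𝒩.isClosed (PP n) (hPP n)) (a (gf n)))‖ ≤ δ := by
      rw [heq]
      refine le_trans (norm_sub_subProj_le _ _ _) ?_
      rw [← map_sub]
      refine le_trans (a.le_opNorm _) ?_
      have h4 : ‖ss n - gf n‖ ≤ δ / (1 + ‖a‖) := hssApp n
      have h5 : ‖a‖ * ‖ss n - gf n‖ ≤ ‖a‖ * (δ / (1 + ‖a‖)) :=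
        mul_le_mul_of_nonneg_left h4 (norm_nonneg a)
      refine le_trans h5 ?_
      rw [mul_comm, div_mul_eq_mul_div, div_le_iff₀ (by positivity : (0:ℝ) < 1 + ‖a‖)]
      nlinarith
    have h6 := hssA n
    have h7 := norm_sub_norm_le
      (a (ss n) - subProj (PP n) (𝒩.isClosed (PP n) (hPP n)) (a (ss n)))
      (a (gf n) - subProj (PP n) (𝒩.isClosed (PP n) (hPP n)) (a (gf n)))
    linarith
  have hgfpos : ∀ n, 0 < ‖gf n‖ := by
    intro n
    have h1 := hgfA n
    have h2 : ‖a (gf n) - subProj (PP n) (𝒩.isClosed (PP n) (hPP n)) (a (gf n))‖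
        ≤ ‖a (gf n)‖ := norm_sub_subProj_le _ _ _
    have h3 := a.le_opNorm (gf n)
    nlinarith
  have hffnorm : ∀ n, ‖ffv n‖ = 1 := by
    intro n
    rw [hffdef, norm_smul, norm_inv, Complex.norm_real, Real.norm_eq_abs,
      abs_of_pos (hgfpos n), inv_mul_cancel₀ (ne_of_gt (hgfpos n))]
  have hffmem : ∀ n, ffv n ∈ PP (n+1) := fun n => (PP (n+1)).smul_mem _ (hgfmem n)
  have hfforth : ∀ n, ∀ w ∈ PP n, ⟪w, ffv n⟫_ℂ = 0 := by
    intro n w hw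
    rw [hffdef, inner_smul_right, hgforth n w hw, mul_zero]
  have hffA : ∀ n, 2 * ε - 2 * δ ≤
      ‖a (ffv n) - subProj (PP n) (𝒩.isClosed (PP n) (hPP n)) (a (ffv n))‖ := by
    intro n
    have heq : a (ffv n) - subProj (PP n) (𝒩.isClosed (PP n) (hPP n)) (a (ffv n))
        = ((‖gf n‖ : ℂ))⁻¹ • (a (gf n) - subProj (PP n) (𝒩.isClosed (PP n) (hPP n)) (a (gf n))) := by
      rw [hffdef, map_smul, map_smul, smul_sub]
    rw [heq, norm_smul, norm_inv, Complex.norm_real, Real.norm_eq_abs, abs_of_pos (hgfpos n)]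
    have h1 := hgfA n
    have h2 : (1:ℝ) ≤ ‖gf n‖⁻¹ := (one_le_inv₀ (hgfpos n)).2 (hgfnorm n)
    nlinarith
    -- facts about yv, ge, eev
  have hyvQ : ∀ n, yv n ∈ Q := fun n =>
    Q.sub_mem (hbalg Q hQ _ (hxxQ n)) ((le_of_lt (hPPQ n)) (subProj_mem _ _ _))
  have hyvOrth : ∀ n, ∀ w ∈ PP n, ⟪w, yv n⟫_ℂ = 0 := by
    intro n w hw
    rw [hyvdef, ← inner_conj_symm, inner_sub_subProj _ _ _ hw, map_zero]
  have hyvNorm : ∀ n, 2 * ε - δ ≤ ‖yv n‖ := fun n => hxxB n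
  have hyvApp : ∀ n, ‖yv (n+1) - subProj (PP (n+2)) (𝒩.isClosed (PP (n+2)) (hPP (n+2)))
      (yv (n+1))‖ ≤ δ := by
    intro n
    have heq : yv (n+1) - subProj (PP (n+2)) (𝒩.isClosed (PP (n+2)) (hPP (n+2))) (yv (n+1))
        = b (xxv (n+1)) - subProj (PP (n+2)) (𝒩.isClosed (PP (n+2)) (hPP (n+2)))
            (b (xxv (n+1))) := by
      rw [hyvdef, map_sub,
        subProj_of_mem_le (𝒩.isClosed (PP (n+1)) (hPP (n+1)))
          (𝒩.isClosed (PP (n+2)) (hPP (n+2))) (hPPmono (Nat.le_succ (n+1))) (b (xxv (n+1)))]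
      abel
    rw [heq]
    exact hbxApp (n+1)
  have hgeNorm : ∀ n, 2 * ε - 2 * δ ≤ ‖ge n‖ := by
    intro n
    have h1 := hyvNorm (n+1)
    have h2 := hyvApp n
    have h3 := norm_sub_norm_le (yv (n+1)) (ge n)
    rw [← hgedef] at h2
    linarith
  have hgepos : ∀ n, 0 < ‖ge n‖ := fun n => lt_of_lt_of_le htwo (hgeNorm n)
  have hgemem : ∀ n, ge n ∈ PP (n+2) := fun n => subProj_mem _ _ _
  have hgeOrth : ∀ n, ∀ w ∈ PP (n+1), ⟪w, ge n⟫_ℂ = 0 := by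
    intro n w hw
    have h1 : ⟪w, yv (n+1) - ge n⟫_ℂ = 0 := by
      rw [← inner_conj_symm, hgedef,
        inner_sub_subProj _ _ _ (hPPmono (Nat.le_succ (n+1)) hw), map_zero]
    have h2 := hyvOrth (n+1) w hw
    have h3 := inner_sub_right (𝕜 := ℂ) w (yv (n+1)) (ge n)
    linear_combination h3 + h2 - h1
  have heevnorm : ∀ n, ‖eev n‖ = 1 := by
    intro n
    rw [heevdef, norm_smul, norm_inv, Complex.norm_real, Real.norm_eq_abs,
      abs_of_pos (hgepos n), inv_mul_cancel₀ (ne_of_gt (hgepos n))]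
  have heevmem : ∀ n, eev n ∈ PP (n+2) := fun n => (PP (n+2)).smul_mem _ (hgemem n)
  have heevOrth : ∀ n, ∀ w ∈ PP (n+1), ⟪w, eev n⟫_ℂ = 0 := by
    intro n w hw
    rw [heevdef, inner_smul_right, hgeOrth n w hw, mul_zero]
  have heevInner : ∀ n, ⟪eev n, b (xxv (n+1))⟫_ℂ = (‖ge n‖ : ℂ) := by
    intro n
    have h1 : ⟪ge n, subProj (PP (n+1)) (𝒩.isClosed (PP (n+1)) (hPP (n+1)))
        (b (xxv (n+1)))⟫_ℂ = 0 := by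
      rw [← inner_conj_symm, hgeOrth n _ (subProj_mem _ _ _), map_zero]
    have h2 : ⟪ge n, yv (n+1) - ge n⟫_ℂ = 0 := by
      rw [hgedef, ← inner_conj_symm, inner_sub_subProj _ _ _ (subProj_mem _ _ _), map_zero]
    have h3 : ⟪ge n, b (xxv (n+1))⟫_ℂ = ⟪ge n, yv (n+1)⟫_ℂ
        + ⟪ge n, subProj (PP (n+1)) (𝒩.isClosed (PP (n+1)) (hPP (n+1))) (b (xxv (n+1)))⟫_ℂ := by
      rw [← inner_add_right, hyvdef]
      congr 1
      abel
    have h4 : ⟪ge n, yv (n+1)⟫_ℂ = ⟪ge n, ge n⟫_ℂ + ⟪ge n, yv (n+1) - ge n⟫_ℂ := by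
      rw [← inner_add_right]
      congr 1
      abel
    have h5 : ⟪ge n, ge n⟫_ℂ = ((‖ge n‖ : ℂ)) ^ 2 := by
      rw [inner_self_eq_norm_sq_to_K]
      norm_cast
    rw [heevdef, inner_smul_left, h3, h4, h2, h1, h5]
    rw [map_inv₀, Complex.conj_ofReal]
    have hne : ((‖ge n‖ : ℂ)) ≠ 0 := by
      simpa using ne_of_gt (hgepos n)
    field_simp
    ring
  -- orthonormality
  have heON : Orthonormal ℂ eev := by
    constructor
    · exact heevnorm
    · intro i j hij
      rcases lt_or_gt_of_ne hij with hlt' | hlt'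
      · exact heevOrth j (eev i) (hPPmono (show i+2 ≤ j+1 by omega) (heevmem i))
      · rw [← inner_conj_symm,
          heevOrth i (eev j) (hPPmono (show j+2 ≤ i+1 by omega) (heevmem j)), map_zero]
  have hfON : Orthonormal ℂ ffv := by
    constructor
    · exact hffnorm
    · intro i j hij
      rcases lt_or_gt_of_ne hij with hlt' | hlt'
      · exact hfforth j (ffv i) (hPPmono (show i+1 ≤ j by omega) (hffmem i))
      · rw [← inner_conj_symm,
          hfforth i (ffv j) (hPPmono (show j+1 ≤ i by omega) (hffmem j)), map_zero]
  -- rank one operators in the algebra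
  have hrank : ∀ n, rankOne (eev n) (ffv n) ∈ nestAlgebra 𝒩 := by
    intro n N hN w hw
    rw [rankOne_apply']
    rcases 𝒩.total N hN (PP (n+1)) (hPP (n+1)) with hle | hle
    · have : ⟪eev n, w⟫_ℂ = 0 := by
        rw [← inner_conj_symm, heevOrth n w (hle hw), map_zero]
      rw [this, zero_smul]
      exact N.zero_mem
    · exact N.smul_mem _ (hle (hffmem n))
  -- eventual domination
  have hdom : ∀ P, P ∈ 𝒩.carrier → P < Q → ∃ n, P ≤ PP n := by
    intro P hP hPQ
    by_contra hcon
    push_neg at hcon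
    have hall : ∀ n, PP n ≤ P := by
      intro n
      rcases 𝒩.total (PP n) (hPP n) P hP with h | h
      · exact h
      · exact absurd h (fun h' => (hcon n) h')
    have hQP : Q ≤ P := by
      intro u hu
      have hucl : u ∈ closure (P : Set H) := by
        rw [Metric.mem_closure_iff]
        intro r hr
        obtain ⟨i, hi⟩ := hz.exists_dist_lt u (by positivity : (0:ℝ) < r/3)
        obtain ⟨n₀, hn₀⟩ := exists_nat_gt (3 / r)
        set n : ℕ := max i n₀ with hn
        refine ⟨subProj (PP (n+1)) (𝒩.isClosed (PP (n+1)) (hPP (n+1)))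
          (subProj Q (𝒩.isClosed Q hQ) (z i)), hall (n+1) (subProj_mem _ _ _), ?_⟩
        have h1 : ‖subProj Q (𝒩.isClosed Q hQ) (z i) - u‖ ≤ ‖z i - u‖ := by
          have : subProj Q (𝒩.isClosed Q hQ) (z i) - u
              = subProj Q (𝒩.isClosed Q hQ) (z i - u) := by
            rw [map_sub, subProj_eq_self Q (𝒩.isClosed Q hQ) hu]
          rw [this]
          exact norm_subProj_le _ _ _
        have h2 := hzzApp n i (le_max_left i n₀)
        have h3 : (1:ℝ) / (n + 1) < r / 3 := by
          rw [div_lt_div_iff₀ (by positivity) (by norm_num)]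
          have : (3:ℝ) / r < n₀ := hn₀
          have hn₀n : (n₀:ℝ) ≤ (n:ℝ) := by exact_mod_cast le_max_right i n₀
          rw [div_lt_iff₀ hr] at this
          nlinarith
        have heq2 : u - subProj (PP (n+1)) (𝒩.isClosed (PP (n+1)) (hPP (n+1)))
            (subProj Q (𝒩.isClosed Q hQ) (z i))
            = (u - subProj Q (𝒩.isClosed Q hQ) (z i))
              + (subProj Q (𝒩.isClosed Q hQ) (z i)
                - subProj (PP (n+1)) (𝒩.isClosed (PP (n+1)) (hPP (n+1)))
                  (subProj Q (𝒩.isClosed Q hQ) (z i))) := by abel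
        have hq : ‖u - subProj Q (𝒩.isClosed Q hQ) (z i)‖ ≤ dist u (z i) := by
          rw [norm_sub_rev, dist_eq_norm]
          calc ‖subProj Q (𝒩.isClosed Q hQ) (z i) - u‖ ≤ ‖z i - u‖ := h1
            _ = ‖u - z i‖ := norm_sub_rev _ _
        rw [dist_eq_norm, heq2]
        calc ‖(u - subProj Q (𝒩.isClosed Q hQ) (z i))
              + (subProj Q (𝒩.isClosed Q hQ) (z i)
                - subProj (PP (n+1)) (𝒩.isClosed (PP (n+1)) (hPP (n+1)))
                  (subProj Q (𝒩.isClosed Q hQ) (z i)))‖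
            ≤ ‖u - subProj Q (𝒩.isClosed Q hQ) (z i)‖
              + ‖subProj Q (𝒩.isClosed Q hQ) (z i)
                - subProj (PP (n+1)) (𝒩.isClosed (PP (n+1)) (hPP (n+1)))
                  (subProj Q (𝒩.isClosed Q hQ) (z i))‖ := norm_add_le _ _
          _ < r := by linarith [h2, h3, hi, hq]
      rwa [IsClosed.closure_eq (𝒩.isClosed P hP)] at hucl
    exact absurd hQP (not_le_of_gt hPQ)
    -- conclusion
  refine ⟨eev, ffv, heON, hfON, hrank, ?_⟩
  intro k hk
  have heON' : Orthonormal ℂ (fun n => eev (k n)) := heON.comp k hk.injective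
  have hfON' : Orthonormal ℂ (fun n => ffv (k n)) := hfON.comp k hk.injective
  refine ⟨synthOp heON' hfON', ?_, ?_⟩
  · intro h
    have hs := (synth_hasSum heON' hfON' h).tendsto_sum_nat
    have hfun : (fun N => ∑ n ∈ Finset.range N, rankOne (eev (k n)) (ffv (k n)) h)
        = fun N => ∑ n ∈ Finset.range N, ⟪eev (k n), h⟫_ℂ • ffv (k n) := by
      funext N
      exact Finset.sum_congr rfl (fun n _ => rankOne_apply' _ _ _)
    rw [hfun]
    exact hs
  · intro P hP hPQ
    obtain ⟨N₀, hN₀⟩ := hdom P hP hPQ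
    set n' : ℕ := k N₀ with hn'
    have hPle : P ≤ PP n' := le_trans hN₀ (hPPmono hk.le_apply)
    have hPle1 : P ≤ PP (n'+1) := le_trans hPle (hPPmono (Nat.le_succ n'))
    set x : H := xxv (n'+1) with hxdef
    set cc : H →L[ℂ] H := synthOp heON' hfON' with hcc
    set v₁ : H := subProj (PP (n'+2)) (𝒩.isClosed (PP (n'+2)) (hPP (n'+2))) (b x) with hv₁
    set v₂ : H := b x - v₁ with hv₂
    have hv₂δ : ‖v₂‖ ≤ δ := hbxApp (n'+1)
    set Mop : H →L[ℂ] H := subProj Q (𝒩.isClosed Q hQ)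
      - subProj (PP n') (𝒩.isClosed (PP n') (hPP n')) with hMop
    have hMle : ∀ w, ‖Mop w‖ ≤ ‖w‖ := by
      intro w
      have h1 : Mop w = subProj Q (𝒩.isClosed Q hQ) w
          - subProj (PP n') (𝒩.isClosed (PP n') (hPP n'))
            (subProj Q (𝒩.isClosed Q hQ) w) := by
        rw [hMop, ContinuousLinearMap.sub_apply,
          subProj_subProj_of_le (𝒩.isClosed (PP n') (hPP n')) (𝒩.isClosed Q hQ)
            (hPPQ n').le w]
      rw [h1]
      exact le_trans (norm_sub_subProj_le _ _ _) (norm_subProj_le _ _ _)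
    have hMzero : ∀ w ∈ PP n', Mop w = 0 := by
      intro w hw
      rw [hMop, ContinuousLinearMap.sub_apply,
        subProj_eq_self Q (𝒩.isClosed Q hQ) ((hPPQ n').le hw),
        subProj_eq_self (PP n') (𝒩.isClosed (PP n') (hPP n')) hw, sub_self]
    -- the test vector is fixed by the corner projection
    have hEx : subProj Q (𝒩.isClosed Q hQ) x - subProj P (𝒩.isClosed P hP) x = x := by
      rw [subProj_eq_self Q (𝒩.isClosed Q hQ) (hxxQ (n'+1)),
        subProj_eq_zero_of_orth P (𝒩.isClosed P hP)
          (fun w hw => hxxOrth (n'+1) w (hPle1 hw)), sub_zero]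
    have hWx : ((𝒩.proj Q hQ * (1 - 𝒩.proj P hP)) * a * cc * b
          * (𝒩.proj Q hQ * (1 - 𝒩.proj P hP))) x
        = subProj Q (𝒩.isClosed Q hQ) (a (cc (b x)))
          - subProj P (𝒩.isClosed P hP) (a (cc (b x))) := by
      have hEPa : ∀ y : H, (𝒩.proj Q hQ) ((1 - 𝒩.proj P hP) y)
          = subProj Q (𝒩.isClosed Q hQ) y - subProj P (𝒩.isClosed P hP) y := by
        intro y
        rw [← ContinuousLinearMap.mul_apply, EP_apply 𝒩 hQ hP hPQ.le]
      simp only [ContinuousLinearMap.mul_apply]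
      rw [hEPa, hEPa, hEx]
    have hMDP : ∀ u0 : H, Mop (subProj Q (𝒩.isClosed Q hQ) u0
        - subProj P (𝒩.isClosed P hP) u0) = Mop u0 := by
      intro u0
      rw [hMop, ContinuousLinearMap.sub_apply, ContinuousLinearMap.sub_apply]
      rw [map_sub, map_sub]
      rw [subProj_eq_self Q (𝒩.isClosed Q hQ) (subProj_mem Q (𝒩.isClosed Q hQ) u0),
        subProj_eq_self Q (𝒩.isClosed Q hQ) (hPQ.le (subProj_mem P (𝒩.isClosed P hP) u0)),
        subProj_subProj_of_le (𝒩.isClosed (PP n') (hPP n')) (𝒩.isClosed Q hQ) (hPPQ n').le,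
        subProj_eq_self (PP n') (𝒩.isClosed (PP n') (hPP n'))
          (hPle (subProj_mem P (𝒩.isClosed P hP) u0))]
      abel
    -- the finite sum expression for cc v₁
    have hcv₁ : cc v₁ = ∑ j ∈ Finset.range (N₀+1), ⟪eev (k j), v₁⟫_ℂ • ffv (k j) := by
      rw [hcc, synthOp_apply]
      refine tsum_eq_sum ?_
      intro j hj
      have hjge : N₀ + 1 ≤ j := by
        by_contra hcon'
        exact hj (Finset.mem_range.2 (by omega))
      have hkj : n' + 1 ≤ k j := by
        rw [hn']
        calc k N₀ + 1 ≤ k (N₀ + 1) := hk (Nat.lt_succ_self N₀)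
          _ ≤ k j := hk.monotone hjge
      have hv₁mem : v₁ ∈ PP (k j + 1) :=
        hPPmono (show n' + 2 ≤ k j + 1 by omega) (subProj_mem _ _ _)
      rw [← inner_conj_symm, heevOrth (k j) v₁ hv₁mem, map_zero, zero_smul]
    -- the coefficient at N₀
    have hcoef : ⟪eev n', v₁⟫_ℂ = (‖ge n'‖ : ℂ) := by
      have h1 : ⟪v₂, eev n'⟫_ℂ = 0 := by
        rw [hv₂, hv₁]
        exact inner_sub_subProj (PP (n'+2)) (𝒩.isClosed (PP (n'+2)) (hPP (n'+2))) (b x)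
          (heevmem n')
      have h2 : ⟪eev n', v₂⟫_ℂ = 0 := by
        rw [← inner_conj_symm, h1, map_zero]
      have h3 : ⟪eev n', v₁⟫_ℂ = ⟪eev n', b x⟫_ℂ - ⟪eev n', v₂⟫_ℂ := by
        have h4 := inner_sub_right (𝕜 := ℂ) (eev n') (b x) v₂
        have h5 : b x - v₂ = v₁ := by rw [hv₂]; abel
        rw [h5] at h4
        rw [h4]
      rw [h3, h2, sub_zero, hxdef]
      exact heevInner n'
    -- collapsing the sum
    have h21 : Mop (a (cc v₁)) = (‖ge n'‖ : ℂ) • Mop (a (ffv n')) := by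
      rw [hcv₁, map_sum, map_sum]
      have hterm : ∀ j ∈ Finset.range (N₀+1), j ≠ N₀ →
          Mop (a (⟪eev (k j), v₁⟫_ℂ • ffv (k j))) = 0 := by
        intro j hj hne
        have hjlt : j < N₀ := by
          have := Finset.mem_range.1 hj; omega
        have hkj1 : k j + 1 ≤ n' := by
          rw [hn']
          exact hk hjlt
        have hmem' : a (ffv (k j)) ∈ PP n' :=
          hPPmono hkj1 (haalg (PP (k j + 1)) (hPP (k j + 1)) _ (hffmem (k j)))
        rw [map_smul, map_smul, hMzero _ hmem', smul_zero]
      rw [Finset.sum_eq_single_of_mem N₀ (Finset.self_mem_range_succ N₀) hterm]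
      rw [map_smul, map_smul, ← hn', hcoef]
    have h20 : 2 * ε - 2 * δ ≤ ‖Mop (a (ffv n'))‖ := by
      have heq : Mop (a (ffv n')) = a (ffv n')
          - subProj (PP n') (𝒩.isClosed (PP n') (hPP n')) (a (ffv n')) := by
        rw [hMop, ContinuousLinearMap.sub_apply,
          subProj_eq_self Q (𝒩.isClosed Q hQ)
            (haalg Q hQ _ ((hPPQ (n'+1)).le (hffmem n')))]
      rw [heq]
      exact hffA n'
    have h22 : ‖Mop (a (cc v₁))‖ = ‖ge n'‖ * ‖Mop (a (ffv n'))‖ := by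
      rw [h21, norm_smul, Complex.norm_real, Real.norm_eq_abs, abs_of_pos (hgepos n')]
    have h23 : ‖Mop (a (cc v₂))‖ ≤ ‖a‖ * δ := by
      calc ‖Mop (a (cc v₂))‖ ≤ ‖a (cc v₂)‖ := hMle _
        _ ≤ ‖a‖ * ‖cc v₂‖ := a.le_opNorm _
        _ ≤ ‖a‖ * δ := by
            have h6 : ‖cc v₂‖ ≤ ‖v₂‖ := synth_norm_le heON' hfON' v₂
            exact mul_le_mul_of_nonneg_left (le_trans h6 hv₂δ) (norm_nonneg a)
    have h24 : Mop (a (cc (b x))) = Mop (a (cc v₁)) + Mop (a (cc v₂)) := by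
      have hbsplit : b x = v₁ + v₂ := by rw [hv₂]; abel
      rw [hbsplit, map_add, map_add, map_add]
    have h25 : ‖Mop (a (cc v₁))‖ - ‖Mop (a (cc v₂))‖ ≤ ‖Mop (a (cc (b x)))‖ := by
      rw [h24]
      have h7 := norm_sub_norm_le (Mop (a (cc v₁))) (-(Mop (a (cc v₂))))
      rw [sub_neg_eq_add, norm_neg] at h7
      linarith
    have h26 : ‖Mop (a (cc (b x)))‖
        ≤ ‖((𝒩.proj Q hQ * (1 - 𝒩.proj P hP)) * a * cc * b
            * (𝒩.proj Q hQ * (1 - 𝒩.proj P hP))) x‖ := by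
      rw [hWx, ← hMDP (a (cc (b x)))]
      exact hMle _
    have h27 : ‖((𝒩.proj Q hQ * (1 - 𝒩.proj P hP)) * a * cc * b
          * (𝒩.proj Q hQ * (1 - 𝒩.proj P hP))) x‖
        ≤ ‖(𝒩.proj Q hQ * (1 - 𝒩.proj P hP)) * a * cc * b
            * (𝒩.proj Q hQ * (1 - 𝒩.proj P hP))‖ :=
      ContinuousLinearMap.unit_le_opNorm _ x (hxxNorm (n'+1))
    have hprod : (2 * ε - 2 * δ) * (2 * ε - 2 * δ) ≤ ‖ge n'‖ * ‖Mop (a (ffv n'))‖ := by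
      nlinarith [hgeNorm n', h20, htwo]
    linarith [hfinal, hprod, h22, h23, h25, h26, h27]
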